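/- Let R ∈ {0} ∪ ℕ and let S1, S2 be finite disjoint subsets of ℤ², each satisfying the R-closure condition, which are not connected by any parallelogram of eccentricity at most R in the following sense: whenever n1, n2 lie in one of the two sets and n3 lies in the other, then |ω₄(n1, n2, n3, n1−n2+n3)| > R and |ω₄(n1, n3, n2, n1−n3+n2)| > R, where ω₄(m1,m2,m3,m4) := |m1|² − |m2|² + |m3|² − |m4|². If a and b are solutions of the R-truncated system on an interval I containing 0, with a_n(0) = 0 for n ∉ S1 and b_n(0) = 0 for n ∉ S2, then t ↦ (a_n(t) + b_n(t))_{n∈ℤ²} is also a solution of the R-truncated system on I. -/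

import Mathlib

open scoped BigOperators ENNReal NNReal
open Complex
open MeasureTheory

noncomputable section

lemma ofReal_norm_eq_coe_nnnorm {E : Type*} [SeminormedAddGroup E] (a : E) :
    ENNReal.ofReal ‖a‖ = (‖a‖₊ : ℝ≥0∞) := ENNReal.ofReal_eq_coe_nnreal _

/-- Frequencies in `ℤ²`. -/
abbrev Z2 : Type := ℤ × ℤ

/-- Squared Euclidean norm `|n|²` on `ℤ²`. -/
def sq2 (n : Z2) : ℤ := n.1 ^ 2 + n.2 ^ 2

/-- Euclidean dot product on `ℤ²`. -/
def dot2 (m n : Z2) : ℤ := m.1 * n.1 + m.2 * n.2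

/-- The resonance factor `ω₄ = |n1|² - |n2|² + |n3|² - |n4|²`. -/
def omega4 (n1 n2 n3 n4 : Z2) : ℤ := sq2 n1 - sq2 n2 + sq2 n3 - sq2 n4

/-- Right-hand side (already multiplied by `i`, i.e. `a_n' = i·(…)`) of the FNLS system
`-i a_n' = -|a_n|² a_n + Σ_{Γ(n)} a_{n1} conj(a_{n2}) a_{n3} e^{i ω₄ t}`. -/
def fnlsRHS (a : Z2 → ℂ) (n : Z2) (t : ℝ) : ℂ :=
  Complex.I * (-((‖a n‖ : ℂ) ^ 2) * a n +
    ∑' p : Z2 × Z2 × Z2,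
      if p.1 - p.2.1 + p.2.2 = n ∧ p.1 ≠ n ∧ p.2.2 ≠ n then
        a p.1 * (starRingEnd ℂ) (a p.2.1) * a p.2.2 *
          Complex.exp (Complex.I * ((omega4 p.1 p.2.1 p.2.2 n : ℤ) : ℂ) * (t : ℂ))
      else 0)

/-- Right-hand side of the `R`-truncated system (interactions with `|ω₄| ≤ R` only). -/
def truncRHS (R : ℕ) (a : Z2 → ℂ) (n : Z2) (t : ℝ) : ℂ :=
  Complex.I * (-((‖a n‖ : ℂ) ^ 2) * a n +
    ∑' p : Z2 × Z2 × Z2,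
      if p.1 - p.2.1 + p.2.2 = n ∧ p.1 ≠ n ∧ p.2.2 ≠ n ∧
          |omega4 p.1 p.2.1 p.2.2 n| ≤ (R : ℤ) then
        a p.1 * (starRingEnd ℂ) (a p.2.1) * a p.2.2 *
          Complex.exp (Complex.I * ((omega4 p.1 p.2.1 p.2.2 n : ℤ) : ℂ) * (t : ℂ))
      else 0)

/-- Right-hand side of the resonant system RFNLS (only `ω₄ = 0` interactions, no phases). -/
def resRHS (a : Z2 → ℂ) (n : Z2) : ℂ :=
  Complex.I * (-((‖a n‖ : ℂ) ^ 2) * a n +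
    ∑' p : Z2 × Z2 × Z2,
      if p.1 - p.2.1 + p.2.2 = n ∧ p.1 ≠ n ∧ p.2.2 ≠ n ∧
          omega4 p.1 p.2.1 p.2.2 n = 0 then
        a p.1 * (starRingEnd ℂ) (a p.2.1) * a p.2.2
      else 0)

/-- `a` is a solution of the FNLS system on the set `I`: absolutely summable values,
locally bounded `ℓ¹` norm, and coordinatewise differentiable satisfying the equation. -/
def IsFNLSSolution (I : Set ℝ) (a : ℝ → Z2 → ℂ) : Prop :=
  (∀ t ∈ I, Summable fun n : Z2 => ‖a t n‖) ∧
  (∀ t1 ∈ I, ∀ t2 ∈ I, ∃ C : ℝ, ∀ t ∈ Set.Icc t1 t2 ∩ I, (∑' n : Z2, ‖a t n‖) ≤ C) ∧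
  (∀ n : Z2, ∀ t ∈ I, HasDerivWithinAt (fun τ => a τ n) (fnlsRHS (a t) n t) I t)

/-- `a` is a solution of the `R`-truncated system on `I`. -/
def IsTruncSolution (R : ℕ) (I : Set ℝ) (a : ℝ → Z2 → ℂ) : Prop :=
  (∀ t ∈ I, Summable fun n : Z2 => ‖a t n‖) ∧
  (∀ t1 ∈ I, ∀ t2 ∈ I, ∃ C : ℝ, ∀ t ∈ Set.Icc t1 t2 ∩ I, (∑' n : Z2, ‖a t n‖) ≤ C) ∧
  (∀ n : Z2, ∀ t ∈ I, HasDerivWithinAt (fun τ => a τ n) (truncRHS R (a t) n t) I t)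

/-- `a` is a solution of the resonant system RFNLS on `I`. -/
def IsRFNLSSolution (I : Set ℝ) (a : ℝ → Z2 → ℂ) : Prop :=
  (∀ t ∈ I, Summable fun n : Z2 => ‖a t n‖) ∧
  (∀ t1 ∈ I, ∀ t2 ∈ I, ∃ C : ℝ, ∀ t ∈ Set.Icc t1 t2 ∩ I, (∑' n : Z2, ‖a t n‖) ≤ C) ∧
  (∀ n : Z2, ∀ t ∈ I, HasDerivWithinAt (fun τ => a τ n) (resRHS (a t) n) I t)

/-- The square of the `h^s` norm `Σ (1+|n|²)^s |a_n|²`, valued in `ℝ≥0∞`. -/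
def hsNormSqE (s : ℝ) (a : Z2 → ℂ) : ℝ≥0∞ :=
  ∑' n : Z2, ENNReal.ofReal ((1 + (sq2 n : ℝ)) ^ s * ‖a n‖ ^ 2)

/-- The toy system with `P` modes `b_1, …, b_P`, with the convention `b_0 = b_{P+1} = 0`. -/
def IsToySolution (P : ℕ) (I : Set ℝ) (b : ℝ → ℕ → ℂ) : Prop :=
  (∀ t ∈ I, b t 0 = 0) ∧
  (∀ t ∈ I, ∀ j : ℕ, P < j → b t j = 0) ∧
  (∀ j : ℕ, 1 ≤ j → j ≤ P → ∀ t ∈ I,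
    HasDerivWithinAt (fun τ => b τ j)
      (Complex.I * (-((‖b t j‖ : ℂ) ^ 2) * b t j
        + 2 * (b t (j + 1)) ^ 2 * (starRingEnd ℂ) (b t j)
        + 2 * (b t (j - 1)) ^ 2 * (starRingEnd ℂ) (b t j))) I t)

/-- `S` satisfies the `R`-closure condition. -/
def RClosed (R : ℕ) (S : Set Z2) : Prop :=
  ∀ n1 n2 n3 : Z2, n1 ∈ S → n2 ∈ S → n3 ∈ S →
    |omega4 n1 n2 n3 (n1 - n2 + n3)| ≤ (R : ℤ) → n1 - n2 + n3 ∈ S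

/-- A rectangle in `ℤ²`: a quadruple of distinct points forming a parallelogram
(`n1 + n3 = n2 + n4`) with `ω₄ = 0`. -/
def IsRectangle (n1 n2 n3 n4 : Z2) : Prop :=
  n1 ≠ n2 ∧ n1 ≠ n3 ∧ n1 ≠ n4 ∧ n2 ≠ n3 ∧ n2 ≠ n4 ∧ n3 ≠ n4 ∧
  n1 + n3 = n2 + n4 ∧ sq2 n1 + sq2 n3 = sq2 n2 + sq2 n4

/-- Closure under completing rectangles: if three vertices of a rectangle lie in `S`,
then so does the fourth. -/
def RectClosed (S : Set Z2) : Prop :=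
  ∀ n1 n2 n3 n4 : Z2, IsRectangle n1 n2 n3 n4 → n1 ∈ S → n2 ∈ S → n3 ∈ S → n4 ∈ S

/-- A nuclear family: a rectangle with parents `n1, n3` in generation `Λ j` and
children `n2, n4` in generation `Λ (j+1)`. -/
def IsNuclearFamily (Λ : ℕ → Finset Z2) (j : ℕ) (n1 n2 n3 n4 : Z2) : Prop :=
  IsRectangle n1 n2 n3 n4 ∧ n1 ∈ Λ j ∧ n3 ∈ Λ j ∧ n2 ∈ Λ (j + 1) ∧ n4 ∈ Λ (j + 1)

/-- Existence and uniqueness (up to trivial permutations) of spouse and children. -/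
def SpouseChildren (Λ : ℕ → Finset Z2) (P : ℕ) : Prop :=
  ∀ j : ℕ, 1 ≤ j → j < P → ∀ n1 ∈ Λ j,
    ∃ n3 n2 n4 : Z2, IsNuclearFamily Λ j n1 n2 n3 n4 ∧
      ∀ n3' n2' n4' : Z2, IsNuclearFamily Λ j n1 n2' n3' n4' →
        n3' = n3 ∧ ((n2' = n2 ∧ n4' = n4) ∨ (n2' = n4 ∧ n4' = n2))

/-- Existence and uniqueness (up to trivial permutations) of sibling and parents. -/
def ParentsSibling (Λ : ℕ → Finset Z2) (P : ℕ) : Prop :=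
  ∀ j : ℕ, 1 ≤ j → j < P → ∀ n2 ∈ Λ (j + 1),
    ∃ n4 n1 n3 : Z2, IsNuclearFamily Λ j n1 n2 n3 n4 ∧
      ∀ n1' n3' n4' : Z2, IsNuclearFamily Λ j n1' n2 n3' n4' →
        n4' = n4 ∧ ((n1' = n1 ∧ n3' = n3) ∨ (n1' = n3 ∧ n3' = n1))

/-- Non-degeneracy: the sibling of a frequency is never equal to its spouse. -/
def NonDegenerate (Λ : ℕ → Finset Z2) : Prop :=
  ∀ j : ℕ, ∀ n1 n2 n3 n4 m2 m3 m4 : Z2,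
    IsNuclearFamily Λ j n1 n2 n3 n4 → IsNuclearFamily Λ (j + 1) n2 m2 m3 m4 → m3 ≠ n4

/-- The union `Λ_1 ∪ … ∪ Λ_P` of all generations. -/
def genFinset (Λ : ℕ → Finset Z2) (P : ℕ) : Finset Z2 := (Finset.Icc 1 P).biUnion Λ

/-- Faithfulness: the only rectangles in `Λ` are (permutations of) nuclear families. -/
def FaithfulGen (Λ : ℕ → Finset Z2) (P : ℕ) : Prop :=
  ∀ n1 n2 n3 n4 : Z2,
    n1 ∈ genFinset Λ P → n2 ∈ genFinset Λ P → n3 ∈ genFinset Λ P → n4 ∈ genFinset Λ P →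
    IsRectangle n1 n2 n3 n4 →
    ∃ j : ℕ, 1 ≤ j ∧ j < P ∧
      ((n1 ∈ Λ j ∧ n3 ∈ Λ j ∧ n2 ∈ Λ (j + 1) ∧ n4 ∈ Λ (j + 1)) ∨
       (n2 ∈ Λ j ∧ n4 ∈ Λ j ∧ n1 ∈ Λ (j + 1) ∧ n3 ∈ Λ (j + 1)))

/-- `S` contains at most one vertex of any rectangle having a vertex at `0`. -/
def NoRectangleWithZero (S : Set Z2) : Prop :=
  ∀ m2 m3 m4 : Z2, IsRectangle 0 m2 m3 m4 →
    ¬(m2 ∈ S ∧ m3 ∈ S) ∧ ¬(m2 ∈ S ∧ m4 ∈ S) ∧ ¬(m3 ∈ S ∧ m4 ∈ S)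

/-- `S1` and `S2` are not connected by any (nondegenerate) parallelogram of
eccentricity `≤ R`. -/
def NotConnected (R : ℕ) (S1 S2 : Set Z2) : Prop :=
  ∀ n1 n2 n3 : Z2,
    ((n1 ∈ S1 ∧ n2 ∈ S1 ∧ n3 ∈ S2) ∨ (n1 ∈ S2 ∧ n2 ∈ S2 ∧ n3 ∈ S1)) →
    (n1 ≠ n2 → n2 ≠ n3 → (R : ℤ) < |omega4 n1 n2 n3 (n1 - n2 + n3)|) ∧
    (n1 ≠ n3 → n3 ≠ n2 → (R : ℤ) < |omega4 n1 n3 n2 (n1 - n3 + n2)|)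

/-- A well-posed continuous dynamical system on a normed space `X`. -/
def IsWellPosedFlow {X : Type*} [NormedAddCommGroup X] (S : ℝ → X → X) : Prop :=
  (∀ x : X, S 0 x = x) ∧
  (∀ t1 t2 : ℝ, ∀ x : X, S (t1 + t2) x = S t1 (S t2 x)) ∧
  (∀ x : X, Continuous fun t : ℝ => S t x) ∧
  (∀ T : ℝ, 0 < T → ∀ x : X, ∀ ε : ℝ, 0 < ε → ∃ δ : ℝ, 0 < δ ∧ ∀ y : X, ‖x - y‖ ≤ δ →
     ∀ t ∈ Set.Icc (-T) T, ‖S t x - S t y‖ ≤ ε)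

/-- `sup_{t > 0} ‖S(t)x‖`, valued in `ℝ≥0∞`. -/
def supOrbitPos {X : Type*} [NormedAddCommGroup X] (S : ℝ → X → X) (x : X) : ℝ≥0∞ :=
  ⨆ t : Set.Ioi (0 : ℝ), (‖S (t : ℝ) x‖₊ : ℝ≥0∞)

/-- `sup_{t ∈ ℝ} ‖S(t)x‖`, valued in `ℝ≥0∞`. -/
def supOrbitAll {X : Type*} [NormedAddCommGroup X] (S : ℝ → X → X) (x : X) : ℝ≥0∞ :=
  ⨆ t : ℝ, (‖S t x‖₊ : ℝ≥0∞)

/-- Long-time strong instability of the flow `S` near `φ`. -/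
def LongTimeStrongInstability {X : Type*} [NormedAddCommGroup X]
    (S : ℝ → X → X) (φ : X) : Prop :=
  ∀ δ : ℝ, 0 < δ → δ < 1 → ∀ K : ℝ, 1 ≤ K →
    ∃ φs : X, ‖φ - φs‖ ≤ δ ∧ ENNReal.ofReal K ≤ supOrbitPos S φs

/-- single interaction term -/
def tTerm (R : ℕ) (x : Z2 → ℂ) (n : Z2) (t : ℝ) (p : Z2 × Z2 × Z2) : ℂ :=
  if p.1 - p.2.1 + p.2.2 = n ∧ p.1 ≠ n ∧ p.2.2 ≠ n ∧ |omega4 p.1 p.2.1 p.2.2 n| ≤ (R : ℤ) then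
    x p.1 * (starRingEnd ℂ) (x p.2.1) * x p.2.2 *
      Complex.exp (Complex.I * ((omega4 p.1 p.2.1 p.2.2 n : ℤ) : ℂ) * (t : ℂ))
  else 0

lemma truncRHS_eq (R : ℕ) (x : Z2 → ℂ) (n : Z2) (t : ℝ) :
    truncRHS R x n t = Complex.I * (-((‖x n‖ : ℂ) ^ 2) * x n + ∑' p, tTerm R x n t p) := rfl

lemma norm_exp_I_mul (ω : ℤ) (t : ℝ) : ‖Complex.exp (Complex.I * (ω : ℂ) * (t : ℂ))‖ = 1 := by
  have : Complex.I * (ω : ℂ) * (t : ℂ) = ((ω * t : ℝ) : ℂ) * Complex.I := by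
    push_cast; ring
  rw [this, Complex.norm_exp_ofReal_mul_I]

lemma norm_tTerm (R : ℕ) (x : Z2 → ℂ) (n : Z2) (t : ℝ) (p : Z2 × Z2 × Z2) :
    ‖tTerm R x n t p‖ =
      if p.1 - p.2.1 + p.2.2 = n ∧ p.1 ≠ n ∧ p.2.2 ≠ n ∧ |omega4 p.1 p.2.1 p.2.2 n| ≤ (R : ℤ)
      then ‖x p.1‖ * ‖x p.2.1‖ * ‖x p.2.2‖ else 0 := by
  unfold tTerm
  split
  · rw [norm_mul, norm_mul, norm_mul, norm_exp_I_mul, RCLike.norm_conj, mul_one]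
  · simp

lemma summable_triple {x y z : Z2 → ℂ} (hx : Summable fun n => ‖x n‖)
    (hy : Summable fun n => ‖y n‖) (hz : Summable fun n => ‖z n‖) :
    Summable (fun p : Z2 × Z2 × Z2 => ‖x p.1‖ * ‖y p.2.1‖ * ‖z p.2.2‖) := by
  have h23 : Summable (fun q : Z2 × Z2 => ‖y q.1‖ * ‖z q.2‖) :=
    hy.mul_of_nonneg hz (fun _ => norm_nonneg _) (fun _ => norm_nonneg _)
  have := hx.mul_of_nonneg h23 (fun _ => norm_nonneg _)
    (fun q : Z2 × Z2 => mul_nonneg (norm_nonneg _) (norm_nonneg _))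
  simpa [mul_assoc] using this

lemma summable_tTerm (R : ℕ) {x : Z2 → ℂ} (hx : Summable fun n => ‖x n‖) (n : Z2) (t : ℝ) :
    Summable (tTerm R x n t) := by
  apply Summable.of_norm_bounded (summable_triple hx hx hx)
  intro p
  rw [norm_tTerm]
  split
  · exact le_rfl
  · positivity

lemma tsum_triple_mul (f g h : (ℤ×ℤ) → ℝ≥0∞) :
    ∑' p : (ℤ×ℤ) × (ℤ×ℤ) × (ℤ×ℤ), f p.1 * g p.2.1 * h p.2.2 =
      (∑' n, f n) * (∑' n, g n) * (∑' n, h n) := by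
  rw [ENNReal.tsum_prod' (f := fun p : (ℤ×ℤ) × ((ℤ×ℤ) × (ℤ×ℤ)) => f p.1 * g p.2.1 * h p.2.2)]
  simp_rw [ENNReal.tsum_prod' (f := fun q : (ℤ×ℤ) × (ℤ×ℤ) => f _ * g q.1 * h q.2),
    mul_assoc, ENNReal.tsum_mul_left]
  rw [ENNReal.tsum_mul_right, ENNReal.tsum_mul_right]

lemma tsum_enorm_eq_ofReal {x : (ℤ×ℤ) → ℂ} (hx : Summable fun n => ‖x n‖) :
    (∑' n, (‖x n‖₊ : ℝ≥0∞)) = ENNReal.ofReal (∑' n, ‖x n‖) := by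
  rw [ENNReal.ofReal_tsum_of_nonneg (fun n => norm_nonneg _) hx]
  congr 1; ext n
  rw [ofReal_norm_eq_coe_nnnorm]
-- real norm bound on truncRHS
lemma norm_truncRHS_le (R : ℕ) {x : Z2 → ℂ} (hx : Summable fun n => ‖x n‖)
    (n : Z2) (t : ℝ) :
    ‖truncRHS R x n t‖ ≤ ‖x n‖ ^ 3 + ∑' p, ‖tTerm R x n t p‖ := by
  rw [truncRHS_eq, norm_mul, Complex.norm_I, one_mul]
  refine (norm_add_le _ _).trans ?_
  have hdiag : ‖-((‖x n‖:ℂ) ^ 2) * x n‖ = ‖x n‖ ^ 3 := by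
    rw [norm_mul, norm_neg, norm_pow, Complex.norm_real, norm_norm]; ring
  gcongr
  · exact le_of_eq hdiag
  · exact norm_tsum_le_tsum_norm (summable_tTerm R hx n t).norm

lemma tsum_norm_triple_eq {x : Z2 → ℂ} (hx : Summable fun n => ‖x n‖) :
    (∑' p : Z2 × Z2 × Z2, ‖x p.1‖ * ‖x p.2.1‖ * ‖x p.2.2‖)
      = (∑' m, ‖x m‖) * (∑' m, ‖x m‖) * (∑' m, ‖x m‖) := by
  have h2 : Summable (fun q : Z2 × Z2 => ‖x q.1‖ * ‖x q.2‖) :=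
    hx.mul_of_nonneg hx (fun _ => norm_nonneg _) (fun _ => norm_nonneg _)
  have h3 := summable_triple hx hx hx
  rw [Summable.tsum_prod h3]
  simp_rw [mul_assoc, tsum_mul_left]
  rw [tsum_mul_right]
  congr 1
  rw [Summable.tsum_prod h2]
  simp_rw [tsum_mul_left]
  rw [tsum_mul_right]

lemma norm_truncRHS_le_const (R : ℕ) {x : Z2 → ℂ} (hx : Summable fun n => ‖x n‖)
    {M : ℝ} (hM : (∑' n, ‖x n‖) ≤ M) (n : Z2) (t : ℝ) :
    ‖truncRHS R x n t‖ ≤ 2 * M ^ 3 := by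
  have hxn : ‖x n‖ ≤ M := le_trans (Summable.le_tsum hx n fun _ _ => norm_nonneg _) hM
  have hM0 : (0:ℝ) ≤ M := le_trans (norm_nonneg _) hxn
  have h1 : (∑' p, ‖tTerm R x n t p‖) ≤ M ^ 3 := by
    refine le_trans (Summable.tsum_le_tsum (fun p => ?_) (summable_tTerm R hx n t).norm
      (summable_triple hx hx hx)) ?_
    · rw [norm_tTerm]; split
      · exact le_rfl
      · positivity
    · rw [tsum_norm_triple_eq hx]
      calc (∑' m, ‖x m‖) * (∑' m, ‖x m‖) * (∑' m, ‖x m‖) ≤ M * M * M := by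
            have h0 : (0:ℝ) ≤ ∑' m, ‖x m‖ := tsum_nonneg fun _ => norm_nonneg _
            gcongr
        _ = M ^ 3 := by ring
  calc ‖truncRHS R x n t‖ ≤ ‖x n‖ ^ 3 + ∑' p, ‖tTerm R x n t p‖ := norm_truncRHS_le R hx n t
    _ ≤ M ^ 3 + M ^ 3 := by gcongr
    _ = 2 * M ^ 3 := by ring
/-- ENNReal bound on `truncRHS` with explicit interaction terms. -/
lemma enorm_truncRHS_le (R : ℕ) {x : Z2 → ℂ} (hx : Summable fun n => ‖x n‖)
    (n : Z2) (t : ℝ) :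
    (‖truncRHS R x n t‖₊ : ℝ≥0∞) ≤ (‖x n‖₊ : ℝ≥0∞) ^ 3 +
      ∑' p : Z2 × Z2 × Z2,
        (if p.1 - p.2.1 + p.2.2 = n ∧ p.1 ≠ n ∧ p.2.2 ≠ n ∧
            |omega4 p.1 p.2.1 p.2.2 n| ≤ (R : ℤ) then
          (‖x p.1‖₊ : ℝ≥0∞) * (‖x p.2.1‖₊ : ℝ≥0∞) * (‖x p.2.2‖₊ : ℝ≥0∞) else 0) := by
  have h1 : (‖truncRHS R x n t‖₊ : ℝ≥0∞)
      ≤ ENNReal.ofReal (‖x n‖ ^ 3 + ∑' p, ‖tTerm R x n t p‖) := by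
    rw [← ofReal_norm_eq_coe_nnnorm]
    exact ENNReal.ofReal_le_ofReal (norm_truncRHS_le R hx n t)
  refine h1.trans ?_
  rw [ENNReal.ofReal_add (by positivity) (tsum_nonneg fun _ => norm_nonneg _)]
  gcongr
  · rw [← ofReal_norm_eq_coe_nnnorm, ← ENNReal.ofReal_pow (norm_nonneg _)]
  · rw [ENNReal.ofReal_tsum_of_nonneg (fun _ => norm_nonneg _)
      (summable_tTerm R hx n t).norm]
    refine ENNReal.tsum_le_tsum fun p => ?_
    rw [norm_tTerm]
    split
    · rw [ENNReal.ofReal_mul (by positivity), ENNReal.ofReal_mul (norm_nonneg _),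
        ofReal_norm_eq_coe_nnnorm, ofReal_norm_eq_coe_nnnorm, ofReal_norm_eq_coe_nnnorm]
    · simp

/-- Structural estimate: the `ℓ¹`-mass of the RHS outside an `R`-closed set is
controlled by the `ℓ¹`-mass of the solution outside that set. -/
lemma badsum_le (R : ℕ) (S : Finset Z2) (hS : RClosed R (S : Set Z2))
    {x : Z2 → ℂ} (hx : Summable fun n => ‖x n‖) {M : ℝ} (hM : (∑' n, ‖x n‖) ≤ M)
    (u : Z2 → ℝ) :
    (∑' n : Z2, if n ∈ S then 0 else (‖truncRHS R x n (u n)‖₊ : ℝ≥0∞))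
      ≤ 4 * ENNReal.ofReal M ^ 2 *
        ∑' n : Z2, (if n ∈ S then 0 else (‖x n‖₊ : ℝ≥0∞)) := by
  set e : Z2 → ℝ≥0∞ := fun m => (‖x m‖₊ : ℝ≥0∞) with he
  set χ : Z2 → ℝ≥0∞ := fun m => if m ∈ S then 0 else 1 with hχ
  set Me := ENNReal.ofReal M with hMe
  set F := ∑' n : Z2, (if n ∈ S then 0 else e n) with hF
  have hFχ : F = ∑' n, χ n * e n := by
    rw [hF]; congr 1; ext n; by_cases h : n ∈ S <;> simp [hχ, h]
  have hsum_e : (∑' m, e m) ≤ Me := by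
    rw [he, tsum_enorm_eq_ofReal hx, hMe]
    exact ENNReal.ofReal_le_ofReal hM
  have hem : ∀ m, e m ≤ Me := fun m => le_trans (ENNReal.le_tsum m) hsum_e
  -- pointwise bound
  have key : ∀ n : Z2, (if n ∈ S then 0 else (‖truncRHS R x n (u n)‖₊ : ℝ≥0∞))
      ≤ (if n ∈ S then 0 else e n ^ 3) +
        ∑' p : Z2 × Z2 × Z2, (if p.1 - p.2.1 + p.2.2 = n then
          (χ p.1 + χ p.2.1 + χ p.2.2) * (e p.1 * e p.2.1 * e p.2.2) else 0) := by
    intro n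
    by_cases hn : n ∈ S
    · simp [hn]
    · simp only [hn, if_false]
      refine (enorm_truncRHS_le R hx n (u n)).trans ?_
      gcongr with p
      by_cases hc : p.1 - p.2.1 + p.2.2 = n ∧ p.1 ≠ n ∧ p.2.2 ≠ n ∧
          |omega4 p.1 p.2.1 p.2.2 n| ≤ (R : ℤ)
      · rw [if_pos hc, if_pos hc.1]
        have hbad : p.1 ∉ S ∨ p.2.1 ∉ S ∨ p.2.2 ∉ S := by
          by_contra hall
          push_neg at hall
          have := hS p.1 p.2.1 p.2.2 hall.1 hall.2.1 hall.2.2 (by rw [hc.1]; exact hc.2.2.2)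
          rw [hc.1] at this
          exact hn this
        have hone : (1 : ℝ≥0∞) ≤ χ p.1 + χ p.2.1 + χ p.2.2 := by
          rcases hbad with h | h | h
          · calc (1:ℝ≥0∞) = χ p.1 := by simp [hχ, h]
              _ ≤ χ p.1 + χ p.2.1 + χ p.2.2 := by rw [add_assoc]; exact le_self_add
          · calc (1:ℝ≥0∞) = χ p.2.1 := by simp [hχ, h]
              _ ≤ χ p.1 + χ p.2.1 + χ p.2.2 := le_add_self.trans le_self_add
          · calc (1:ℝ≥0∞) = χ p.2.2 := by simp [hχ, h]
              _ ≤ χ p.1 + χ p.2.1 + χ p.2.2 := le_add_self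
        calc e p.1 * e p.2.1 * e p.2.2 = 1 * (e p.1 * e p.2.1 * e p.2.2) := (one_mul _).symm
          _ ≤ (χ p.1 + χ p.2.1 + χ p.2.2) * (e p.1 * e p.2.1 * e p.2.2) := by gcongr
      · rw [if_neg hc]
        exact zero_le
  calc (∑' n : Z2, if n ∈ S then 0 else (‖truncRHS R x n (u n)‖₊ : ℝ≥0∞))
      ≤ ∑' n : Z2, ((if n ∈ S then 0 else e n ^ 3) +
        ∑' p : Z2 × Z2 × Z2, (if p.1 - p.2.1 + p.2.2 = n then
          (χ p.1 + χ p.2.1 + χ p.2.2) * (e p.1 * e p.2.1 * e p.2.2) else 0)) :=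
        ENNReal.tsum_le_tsum key
    _ = (∑' n : Z2, (if n ∈ S then 0 else e n ^ 3)) +
        ∑' n : Z2, ∑' p : Z2 × Z2 × Z2, (if p.1 - p.2.1 + p.2.2 = n then
          (χ p.1 + χ p.2.1 + χ p.2.2) * (e p.1 * e p.2.1 * e p.2.2) else 0) :=
        ENNReal.tsum_add
    _ ≤ Me ^ 2 * F + 3 * Me ^ 2 * F := by
        gcongr
        · -- diagonal part
          rw [hFχ, ← ENNReal.tsum_mul_left]
          refine ENNReal.tsum_le_tsum fun n => ?_
          by_cases hn : n ∈ S
          · simp [hn]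
          · simp only [hn, if_false]
            have : e n ^ 3 = e n * e n * e n := by ring
            rw [this]
            calc e n * e n * e n ≤ Me * Me * e n := by gcongr <;> exact hem n
              _ = Me ^ 2 * (χ n * e n) := by simp [hχ, hn]; ring
              _ ≤ Me ^ 2 * (χ n * e n) := le_rfl
        · -- interaction part
          rw [ENNReal.tsum_comm]
          have hcollapse : ∀ p : Z2 × Z2 × Z2,
              (∑' n : Z2, if p.1 - p.2.1 + p.2.2 = n then
                (χ p.1 + χ p.2.1 + χ p.2.2) * (e p.1 * e p.2.1 * e p.2.2) else 0)
              = (χ p.1 + χ p.2.1 + χ p.2.2) * (e p.1 * e p.2.1 * e p.2.2) := by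
            intro p
            rw [tsum_eq_single (p.1 - p.2.1 + p.2.2) ?_]
            · simp
            · intro n hn; rw [if_neg (fun h => hn h.symm)]
          rw [tsum_congr hcollapse]
          have hdistrib : ∀ p : Z2 × Z2 × Z2,
              (χ p.1 + χ p.2.1 + χ p.2.2) * (e p.1 * e p.2.1 * e p.2.2)
              = (χ p.1 * e p.1) * e p.2.1 * e p.2.2
                + e p.1 * (χ p.2.1 * e p.2.1) * e p.2.2
                + e p.1 * e p.2.1 * (χ p.2.2 * e p.2.2) := by
            intro p; ring
          rw [tsum_congr hdistrib, ENNReal.tsum_add, ENNReal.tsum_add,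
            tsum_triple_mul (fun m => χ m * e m) e e,
            tsum_triple_mul e (fun m => χ m * e m) e,
            tsum_triple_mul e e (fun m => χ m * e m), ← hFχ]
          calc F * (∑' m, e m) * (∑' m, e m) + (∑' m, e m) * F * (∑' m, e m)
                + (∑' m, e m) * (∑' m, e m) * F
              ≤ F * Me * Me + Me * F * Me + Me * Me * F := by gcongr
            _ = 3 * Me ^ 2 * F := by ring
    _ = 4 * Me ^ 2 * F := by ring
lemma gronwall_zero (T : ℝ) (f : ℝ → ℝ≥0∞) (B K : ℝ≥0∞) (hB : B ≠ ⊤) (hK : K ≠ ⊤)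
    (hfB : ∀ t ∈ Set.Icc (0:ℝ) T, f t ≤ B)
    (hint : ∀ t ∈ Set.Icc (0:ℝ) T, f t ≤ K * ∫⁻ s in Set.Ioc (0:ℝ) t, f s) :
    ∀ t ∈ Set.Icc (0:ℝ) T, f t = 0 := by
  have main : ∀ k : ℕ, ∀ t ∈ Set.Icc (0:ℝ) T,
      f t ≤ B * K ^ k * ENNReal.ofReal (t ^ k / k.factorial) := by
    intro k
    induction k with
    | zero => intro t ht; simpa using hfB t ht
    | succ k ih =>
      intro t ht
      have ht0 : (0:ℝ) ≤ t := ht.1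
      have hcalc : (∫⁻ s in Set.Ioc (0:ℝ) t, ENNReal.ofReal (s ^ k / k.factorial))
          = ENNReal.ofReal (t ^ (k+1) / (k+1).factorial) := by
        have hig : IntegrableOn (fun s : ℝ => s ^ k / k.factorial) (Set.Ioc 0 t) := by
          exact ((intervalIntegral.intervalIntegrable_pow (a := (0:ℝ)) (b := t) k).1).div_const _
        rw [← ofReal_integral_eq_lintegral_ofReal hig
          (((ae_restrict_iff' measurableSet_Ioc).2 (Filter.Eventually.of_forall
            fun s hs => div_nonneg (pow_nonneg hs.1.le k) (Nat.cast_nonneg _))))]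
        congr 1
        rw [← intervalIntegral.integral_of_le ht0, intervalIntegral.integral_div,
          integral_pow, Nat.factorial_succ]
        rw [zero_pow (Nat.succ_ne_zero k)]
        push_cast
        field_simp
        rw [sub_zero]
      calc f t ≤ K * ∫⁻ s in Set.Ioc (0:ℝ) t, f s := hint t ht
        _ ≤ K * ∫⁻ s in Set.Ioc (0:ℝ) t,
            B * K ^ k * ENNReal.ofReal (s ^ k / k.factorial) := by
            refine mul_le_mul_right (setLIntegral_mono
              (show Measurable fun s : ℝ => B * K ^ k * ENNReal.ofReal (s ^ k / k.factorial)
                from (((measurable_id.pow_const k).div_const _).ennreal_ofReal).const_mul _)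
              fun s hs => ih s ⟨hs.1.le, hs.2.trans ht.2⟩) K
        _ = K * (B * K ^ k * ∫⁻ s in Set.Ioc (0:ℝ) t,
            ENNReal.ofReal (s ^ k / k.factorial)) := by
            rw [lintegral_const_mul' _ _ (ENNReal.mul_ne_top hB (ENNReal.pow_ne_top hK))]
        _ = B * K ^ (k+1) * ENNReal.ofReal (t ^ (k+1) / (k+1).factorial) := by
            rw [hcalc]; ring
  intro t ht
  have hlim : Filter.Tendsto
      (fun k : ℕ => B * K ^ k * ENNReal.ofReal (t ^ k / k.factorial))
      Filter.atTop (nhds 0) := by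
    have heq : ∀ k : ℕ, B * K ^ k * ENNReal.ofReal (t ^ k / k.factorial)
        = ENNReal.ofReal (B.toReal * ((K.toReal * t) ^ k / k.factorial)) := by
      intro k
      have ht0 : (0:ℝ) ≤ t := ht.1
      have hK0 : (0:ℝ) ≤ K.toReal := ENNReal.toReal_nonneg
      have hfac : ((k.factorial : ℝ)) ≠ 0 := by positivity
      conv_lhs => rw [← ENNReal.ofReal_toReal hB, ← ENNReal.ofReal_toReal hK]
      rw [← ENNReal.ofReal_pow hK0, ← ENNReal.ofReal_mul (by positivity),
        ← ENNReal.ofReal_mul (by positivity)]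
      congr 1
      rw [mul_pow]
      field_simp
    simp_rw [heq]
    have : Filter.Tendsto (fun k : ℕ => B.toReal * ((K.toReal * t) ^ k / k.factorial))
        Filter.atTop (nhds 0) := by
      have h0 := (Real.summable_pow_div_factorial (K.toReal * t)).tendsto_atTop_zero
      simpa using h0.const_mul B.toReal
    have := (ENNReal.continuous_ofReal.tendsto 0).comp this
    rw [ENNReal.ofReal_zero] at this
    exact this
  have hle : f t ≤ 0 := ge_of_tendsto' hlim (fun k => main k t ht)
  exact le_antisymm hle zero_le
/-- Measurability of the right-hand side along a solution. -/
lemma aesm_truncRHS (R : ℕ) (a : ℝ → Z2 → ℂ) (J : Set ℝ) (hJm : MeasurableSet J)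
    (hcont : ∀ m : Z2, ContinuousOn (fun s => a s m) J)
    (hsum : ∀ s ∈ J, Summable fun m : Z2 => ‖a s m‖) (n : Z2) :
    AEStronglyMeasurable (fun s => truncRHS R (a s) n s) (volume.restrict J) := by
  have hdiag : AEStronglyMeasurable
      (fun s => -((‖a s n‖ : ℂ) ^ 2) * a s n) (volume.restrict J) := by
    apply ContinuousOn.aestronglyMeasurable _ hJm
    exact (((Complex.continuous_ofReal.comp_continuousOn (hcont n).norm).pow 2).neg.mul (hcont n))
  have htermcont : ∀ p : Z2 × Z2 × Z2,
      ContinuousOn (fun s => tTerm R (a s) n s p) J := by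
    intro p
    unfold tTerm
    by_cases hc : p.1 - p.2.1 + p.2.2 = n ∧ p.1 ≠ n ∧ p.2.2 ≠ n ∧
        |omega4 p.1 p.2.1 p.2.2 n| ≤ (R : ℤ)
    · simp only [if_pos hc]
      refine (((hcont p.1).mul ?_).mul (hcont p.2.2)).mul ?_
      · exact Complex.continuous_conj.comp_continuousOn (hcont p.2.1)
      · apply Continuous.continuousOn
        exact Complex.continuous_exp.comp (by continuity)
    · simp only [if_neg hc]
      exact continuousOn_const
  have hts : AEStronglyMeasurable
      (fun s => ∑' p : Z2 × Z2 × Z2, tTerm R (a s) n s p) (volume.restrict J) := by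
    set e : ℕ ≃ (Z2 × Z2 × Z2) := (Denumerable.eqv (Z2 × Z2 × Z2)).symm with he
    refine aestronglyMeasurable_of_tendsto_ae (u := Filter.atTop)
      (f := fun N s => ∑ i ∈ Finset.range N, tTerm R (a s) n s (e i)) ?_ ?_
    · intro N
      apply ContinuousOn.aestronglyMeasurable _ hJm
      apply continuousOn_finset_sum
      intro i _
      exact htermcont (e i)
    · filter_upwards [ae_restrict_mem hJm] with s hs
      have hsm : Summable (fun p => tTerm R (a s) n s p) := summable_tTerm R (hsum s hs) n s
      have := (e.hasSum_iff (f := fun p => tTerm R (a s) n s p)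
        (a := ∑' p, tTerm R (a s) n s p)).2 hsm.hasSum
      exact this.tendsto_sum_nat
  have : AEStronglyMeasurable
      (fun s => -((‖a s n‖ : ℂ) ^ 2) * a s n + ∑' p : Z2 × Z2 × Z2, tTerm R (a s) n s p)
      (volume.restrict J) := hdiag.add hts
  simpa [truncRHS_eq] using this.const_mul Complex.I

/-- Forward-in-time support invariance for an `R`-closed set. -/
lemma support_forward (R : ℕ) (S : Finset Z2) (hS : RClosed R (S : Set Z2))
    (I : Set ℝ) (hI : I.OrdConnected) (h0I : (0:ℝ) ∈ I)
    (a D : ℝ → Z2 → ℂ)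
    (hsum : ∀ t ∈ I, Summable fun n : Z2 => ‖a t n‖)
    (hbdd : ∀ t1 ∈ I, ∀ t2 ∈ I, ∃ C : ℝ, ∀ t ∈ Set.Icc t1 t2 ∩ I, (∑' n : Z2, ‖a t n‖) ≤ C)
    (hD : ∀ n : Z2, ∀ t ∈ I, HasDerivWithinAt (fun τ => a τ n) (D t n) I t)
    (hDnorm : ∀ t ∈ I, ∀ n : Z2, ∃ u : ℝ, ‖D t n‖ = ‖truncRHS R (a t) n u‖)
    (hDmeas : ∀ n : Z2, ∀ t1 : ℝ, 0 ≤ t1 → t1 ∈ I →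
      AEStronglyMeasurable (fun s => D s n) (volume.restrict (Set.Ioc 0 t1)))
    (h0 : ∀ n : Z2, n ∉ S → a 0 n = 0) :
    ∀ T ∈ I, 0 ≤ T → ∀ n : Z2, n ∉ S → a T n = 0 := by
  intro T hTI hT0
  have hIccI : Set.Icc (0:ℝ) T ⊆ I := hI.out h0I hTI
  obtain ⟨C, hC⟩ := hbdd 0 h0I T hTI
  set M : ℝ := max C 0 with hM
  have hMa : ∀ s ∈ Set.Icc (0:ℝ) T, (∑' n : Z2, ‖a s n‖) ≤ M := fun s hs =>
    (hC s ⟨hs, hIccI hs⟩).trans (le_max_left _ _)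
  have hM0 : (0:ℝ) ≤ M := le_max_right _ _
  set Me := ENNReal.ofReal M with hMe
  have hMefin : Me ≠ ⊤ := ENNReal.ofReal_ne_top
  set F : ℝ → ℝ≥0∞ := fun s => ∑' n : Z2, (if n ∈ S then 0 else (‖a s n‖₊ : ℝ≥0∞)) with hFdef
  -- coordinatewise integral bound via FTC
  have coord : ∀ t ∈ Set.Icc (0:ℝ) T, ∀ n : Z2, n ∉ S →
      (‖a t n‖₊ : ℝ≥0∞) ≤ ∫⁻ s in Set.Ioc (0:ℝ) t, (‖D s n‖₊ : ℝ≥0∞) := by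
    intro t ht n hn
    have hIcct : Set.Icc (0:ℝ) t ⊆ I := fun x hx => hIccI ⟨hx.1, hx.2.trans ht.2⟩
    have hcont : ContinuousOn (fun τ => a τ n) (Set.Icc 0 t) := fun x hx =>
      ((hD n x (hIcct hx)).continuousWithinAt).mono hIcct
    have hderiv : ∀ x ∈ Set.Ioo (0:ℝ) t,
        HasDerivWithinAt (fun τ => a τ n) (D x n) (Set.Ioi x) x := by
      intro x hx
      refine (hD n x (hIcct ⟨hx.1.le, hx.2.le⟩)).mono_of_mem_nhdsWithin ?_
      have hsub : Set.Ioc x T ⊆ I := fun y hy => hIccI ⟨(hx.1.trans hy.1).le, hy.2⟩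
      exact Filter.mem_of_superset
        (Ioc_mem_nhdsGT_of_mem ⟨le_refl x, hx.2.trans_le ht.2⟩) hsub
    have hbound : ∀ s ∈ Set.Ioc (0:ℝ) t, ‖D s n‖ ≤ 2 * M ^ 3 := by
      intro s hs
      have hsI : s ∈ Set.Icc (0:ℝ) T := ⟨hs.1.le, hs.2.trans ht.2⟩
      obtain ⟨u, hu⟩ := hDnorm s (hIccI hsI) n
      rw [hu]
      exact norm_truncRHS_le_const R (hsum s (hIccI hsI)) (hMa s hsI) n u
    have hint : IntervalIntegrable (fun s => D s n) volume 0 t := by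
      rw [intervalIntegrable_iff, Set.uIoc_of_le ht.1]
      constructor
      · exact (hDmeas n T hT0 hTI).mono_measure
          (Measure.restrict_mono (Set.Ioc_subset_Ioc_right ht.2) le_rfl)
      · apply MeasureTheory.HasFiniteIntegral.of_bounded (C := 2 * M ^ 3)
        exact (ae_restrict_iff' measurableSet_Ioc).2 (Filter.Eventually.of_forall hbound)
    have hftc := intervalIntegral.integral_eq_sub_of_hasDeriv_right_of_le ht.1 hcont hderiv hint
    have heq : a t n = ∫ s in (0:ℝ)..t, D s n := by rw [hftc, h0 n hn, sub_zero]
    rw [heq, intervalIntegral.integral_of_le ht.1]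
    exact enorm_integral_le_lintegral_enorm _
  -- the Gronwall inequality for F
  have key : ∀ t ∈ Set.Icc (0:ℝ) T, F t ≤ (4 * Me ^ 2) * ∫⁻ s in Set.Ioc (0:ℝ) t, F s := by
    intro t ht
    have haem : ∀ n : Z2, AEMeasurable
        (fun s => (if n ∈ S then 0 else (‖D s n‖₊ : ℝ≥0∞)))
        (volume.restrict (Set.Ioc (0:ℝ) t)) := by
      intro n
      by_cases hn : n ∈ S
      · simp only [hn, if_true]; exact aemeasurable_const
      · simp only [hn, if_false]
        exact ((hDmeas n T hT0 hTI).mono_measure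
          (Measure.restrict_mono (Set.Ioc_subset_Ioc_right ht.2) le_rfl)).enorm
    calc F t ≤ ∑' n : Z2, ∫⁻ s in Set.Ioc (0:ℝ) t,
          (if n ∈ S then 0 else (‖D s n‖₊ : ℝ≥0∞)) := by
          refine ENNReal.tsum_le_tsum fun n => ?_
          by_cases hn : n ∈ S
          · simp [hn]
          · simp only [hn, if_false]
            exact coord t ht n hn
      _ = ∫⁻ s in Set.Ioc (0:ℝ) t, ∑' n : Z2,
          (if n ∈ S then 0 else (‖D s n‖₊ : ℝ≥0∞)) := (lintegral_tsum haem).symm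
      _ ≤ ∫⁻ s in Set.Ioc (0:ℝ) t, (4 * Me ^ 2) * F s := by
          refine setLIntegral_mono' measurableSet_Ioc fun s hs => ?_
          have hsI : s ∈ Set.Icc (0:ℝ) T := ⟨hs.1.le, hs.2.trans ht.2⟩
          have hsImem : s ∈ I := hIccI hsI
          choose u hu using hDnorm s hsImem
          calc (∑' n : Z2, if n ∈ S then 0 else (‖D s n‖₊ : ℝ≥0∞))
              = ∑' n : Z2, (if n ∈ S then 0 else (‖truncRHS R (a s) n (u n)‖₊ : ℝ≥0∞)) := by
                refine tsum_congr fun n => ?_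
                by_cases hn : n ∈ S
                · simp [hn]
                · simp only [hn, if_false]
                  rw [← ofReal_norm_eq_coe_nnnorm, ← ofReal_norm_eq_coe_nnnorm, hu n]
            _ ≤ 4 * Me ^ 2 * F s :=
                badsum_le R S hS (hsum s hsImem) (hMa s hsI) u
      _ = (4 * Me ^ 2) * ∫⁻ s in Set.Ioc (0:ℝ) t, F s := by
          rw [lintegral_const_mul' _ _
            (ENNReal.mul_ne_top (by norm_num) (ENNReal.pow_ne_top hMefin))]
  -- bound on F
  have hFB : ∀ t ∈ Set.Icc (0:ℝ) T, F t ≤ Me := by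
    intro t ht
    calc F t ≤ ∑' n : Z2, (‖a t n‖₊ : ℝ≥0∞) := by
          refine ENNReal.tsum_le_tsum fun n => ?_
          by_cases hn : n ∈ S <;> simp [hn]
      _ = ENNReal.ofReal (∑' n : Z2, ‖a t n‖) := tsum_enorm_eq_ofReal (hsum t (hIccI ht))
      _ ≤ Me := ENNReal.ofReal_le_ofReal (hMa t ht)
  have hzero := gronwall_zero T F Me (4 * Me ^ 2) hMefin
    (ENNReal.mul_ne_top (by norm_num) (ENNReal.pow_ne_top hMefin)) hFB key T ⟨hT0, le_rfl⟩
  intro n hn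
  have hterm : (if n ∈ S then 0 else (‖a T n‖₊ : ℝ≥0∞)) = 0 := by
    have := ENNReal.tsum_eq_zero.1 hzero n
    exact this
  rw [if_neg hn] at hterm
  simpa using hterm

/-- Conjugation-reflection symmetry of the truncated RHS. -/
lemma truncRHS_conj (R : ℕ) (x : Z2 → ℂ) (n : Z2) (u : ℝ) :
    (starRingEnd ℂ) (truncRHS R x n u)
      = - truncRHS R (fun m => (starRingEnd ℂ) (x m)) n (-u) := by
  rw [truncRHS_eq, truncRHS_eq]
  have hterm : ∀ p : Z2 × Z2 × Z2,
      (starRingEnd ℂ) (tTerm R x n u p)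
        = tTerm R (fun m => (starRingEnd ℂ) (x m)) n (-u) p := by
    intro p
    unfold tTerm
    by_cases hc : p.1 - p.2.1 + p.2.2 = n ∧ p.1 ≠ n ∧ p.2.2 ≠ n ∧
        |omega4 p.1 p.2.1 p.2.2 n| ≤ (R : ℤ)
    · rw [if_pos hc, if_pos hc]
      rw [map_mul, map_mul, map_mul, ← Complex.exp_conj]
      rw [Complex.conj_conj]
      have harg : (starRingEnd ℂ) (Complex.I * ((omega4 p.1 p.2.1 p.2.2 n : ℤ) : ℂ) * (u : ℂ))
          = Complex.I * ((omega4 p.1 p.2.1 p.2.2 n : ℤ) : ℂ) * ((-u : ℝ) : ℂ) := by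
        rw [map_mul, map_mul, Complex.conj_I, Complex.conj_ofReal, map_intCast]
        push_cast
        ring
      rw [harg]
    · rw [if_neg hc, if_neg hc, map_zero]
  have htsum : (starRingEnd ℂ) (∑' p, tTerm R x n u p)
      = ∑' p, tTerm R (fun m => (starRingEnd ℂ) (x m)) n (-u) p := by
    have := Complex.conjCLE.map_tsum (L := SummationFilter.unconditional _) (f := fun p => tTerm R x n u p)
    rw [show ((starRingEnd ℂ) (∑' p, tTerm R x n u p))
        = Complex.conjCLE (∑' p, tTerm R x n u p) from rfl, this]
    exact tsum_congr fun p => hterm p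
  rw [map_mul, map_add, htsum, map_mul, map_neg, map_pow, Complex.conj_I, Complex.conj_ofReal]
  have hnormconj : ‖(starRingEnd ℂ) (x n)‖ = ‖x n‖ := RCLike.norm_conj _
  rw [show ((‖x n‖ : ℝ) : ℂ) = ((‖(starRingEnd ℂ) (x n)‖ : ℝ) : ℂ) by rw [hnormconj]]
  ring

/-- Two-sided support invariance for solutions of the truncated system. -/
lemma support_invariant (R : ℕ) (S : Finset Z2) (hS : RClosed R (S : Set Z2))
    (I : Set ℝ) (hI : I.OrdConnected) (h0I : (0:ℝ) ∈ I)
    (a : ℝ → Z2 → ℂ) (ha : IsTruncSolution R I a)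
    (h0 : ∀ n : Z2, n ∉ S → a 0 n = 0) :
    ∀ t ∈ I, ∀ n : Z2, n ∉ S → a t n = 0 := by
  obtain ⟨hsum, hbdd, hD⟩ := ha
  have hcont : ∀ (J : Set ℝ), J ⊆ I → ∀ m : Z2, ContinuousOn (fun s => a s m) J :=
    fun J hJ m x hx => ((hD m x (hJ hx)).continuousWithinAt).mono hJ
  have hfwd : ∀ T ∈ I, 0 ≤ T → ∀ n : Z2, n ∉ S → a T n = 0 := by
    refine support_forward R S hS I hI h0I a (fun t n => truncRHS R (a t) n t)
      hsum hbdd hD (fun t _ n => ⟨t, rfl⟩) ?_ h0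
    intro n t1 ht10 ht1I
    have hsub : Set.Ioc (0:ℝ) t1 ⊆ I := fun x hx => hI.out h0I ht1I ⟨hx.1.le, hx.2⟩
    exact aesm_truncRHS R a _ measurableSet_Ioc (fun m => hcont _ hsub m)
      (fun s hs => hsum s (hsub hs)) n
  set b : ℝ → Z2 → ℂ := fun τ m => (starRingEnd ℂ) (a (-τ) m) with hbdef
  set I' : Set ℝ := (fun τ : ℝ => -τ) ⁻¹' I with hI'def
  have hI' : I'.OrdConnected := by
    constructor
    intro x hx y hy z hz
    exact hI.out hy hx ⟨neg_le_neg hz.2, neg_le_neg hz.1⟩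
  have h0I' : (0:ℝ) ∈ I' := by
    simp only [hI'def, Set.mem_preimage, neg_zero]
    exact h0I
  have hsum' : ∀ τ ∈ I', Summable fun m : Z2 => ‖b τ m‖ := by
    intro τ hτ
    have := hsum (-τ) hτ
    simpa only [hbdef, RCLike.norm_conj] using this
  have hbdd' : ∀ t1 ∈ I', ∀ t2 ∈ I', ∃ C : ℝ,
      ∀ τ ∈ Set.Icc t1 t2 ∩ I', (∑' m : Z2, ‖b τ m‖) ≤ C := by
    intro t1 ht1 t2 ht2
    obtain ⟨C, hC⟩ := hbdd (-t2) ht2 (-t1) ht1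
    refine ⟨C, fun τ hτ => ?_⟩
    have hmem : (-τ) ∈ Set.Icc (-t2) (-t1) ∩ I :=
      ⟨⟨neg_le_neg hτ.1.2, neg_le_neg hτ.1.1⟩, hτ.2⟩
    have hCv := hC (-τ) hmem
    calc (∑' m : Z2, ‖b τ m‖) = ∑' m : Z2, ‖a (-τ) m‖ := by
          simp only [hbdef, RCLike.norm_conj]
      _ ≤ C := hCv
  have hcont' : ∀ (J : Set ℝ), J ⊆ I' → ∀ m : Z2, ContinuousOn (fun s => b s m) J := by
    intro J hJ m
    have hJneg : (Neg.neg '' J : Set ℝ) ⊆ I := by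
      rintro y ⟨x, hx, rfl⟩
      exact hJ hx
    have h1 : ContinuousOn (fun s : ℝ => a (-s) m) J := by
      refine ContinuousOn.comp (hcont _ hJneg m) continuous_neg.continuousOn ?_
      intro x hx
      exact Set.mem_image_of_mem _ hx
    exact Complex.continuous_conj.comp_continuousOn h1
  have hD' : ∀ m : Z2, ∀ τ ∈ I',
      HasDerivWithinAt (fun σ => b σ m) (truncRHS R (b τ) m τ) I' τ := by
    intro m τ hτ
    have hneg : HasDerivWithinAt (fun σ : ℝ => -σ) (-1) I' τ :=
      (hasDerivAt_neg' τ).hasDerivWithinAt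
    have h1 : HasDerivWithinAt (fun σ : ℝ => a (-σ) m)
        ((-1 : ℝ) • truncRHS R (a (-τ)) m (-τ)) I' τ :=
      HasDerivWithinAt.scomp τ (hD m (-τ) hτ) hneg (fun x hx => hx)
    have h2 := (Complex.conjCLE.toContinuousLinearMap.hasFDerivAt).comp_hasDerivWithinAt τ h1
    have hval : Complex.conjCLE.toContinuousLinearMap
        ((-1 : ℝ) • truncRHS R (a (-τ)) m (-τ)) = truncRHS R (b τ) m τ := by
      have hcoe : ∀ z : ℂ, Complex.conjCLE.toContinuousLinearMap z = (starRingEnd ℂ) z :=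
        fun z => rfl
      rw [neg_one_smul ℝ (truncRHS R (a (-τ)) m (-τ)), hcoe, map_neg,
        truncRHS_conj R (a (-τ)) m (-τ), neg_neg, neg_neg]
    rw [hval] at h2
    exact h2
  have hDnorm' : ∀ τ ∈ I', ∀ m : Z2, ∃ u : ℝ, ‖truncRHS R (b τ) m τ‖ = ‖truncRHS R (b τ) m u‖ :=
    fun τ _ m => ⟨τ, rfl⟩
  have hDmeas' : ∀ m : Z2, ∀ t1 : ℝ, 0 ≤ t1 → t1 ∈ I' →
      AEStronglyMeasurable (fun s => truncRHS R (b s) m s)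
        (volume.restrict (Set.Ioc 0 t1)) := by
    intro m t1 ht10 ht1I
    have hsub : Set.Ioc (0:ℝ) t1 ⊆ I' := fun x hx => hI'.out h0I' ht1I ⟨hx.1.le, hx.2⟩
    exact aesm_truncRHS R b _ measurableSet_Ioc (fun q => hcont' _ hsub q)
      (fun s hs => hsum' s (hsub hs)) m
  have h0' : ∀ n : Z2, n ∉ S → b 0 n = 0 := by
    intro n hn
    simp only [hbdef, neg_zero, h0 n hn, map_zero]
  have hbwd := support_forward R S hS I' hI' h0I' b (fun τ m => truncRHS R (b τ) m τ)
    hsum' hbdd' hD' hDnorm' hDmeas' h0'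
  intro t ht n hn
  rcases le_or_gt 0 t with h | h
  · exact hfwd t ht h n hn
  · have htI' : (-t) ∈ I' := by
      simp only [hI'def, Set.mem_preimage, neg_neg]
      exact ht
    have := hbwd (-t) htI' (by linarith) n hn
    simp only [hbdef, neg_neg] at this
    exact star_eq_zero.1 this

lemma omega4_swap (a b c d : Z2) : omega4 a b c d = omega4 c b a d := by
  unfold omega4; ring

/-- Splitting of the truncated RHS for disjointly supported, non-connected data. -/
lemma truncRHS_add_split (R : ℕ) (S1 S2 : Finset Z2) (hdisj : Disjoint S1 S2)
    (hnc : NotConnected R (S1 : Set Z2) (S2 : Set Z2))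
    {x y : Z2 → ℂ} (hx : Summable fun n => ‖x n‖) (hy : Summable fun n => ‖y n‖)
    (hxS : ∀ n : Z2, n ∉ S1 → x n = 0) (hyS : ∀ n : Z2, n ∉ S2 → y n = 0)
    (n : Z2) (t : ℝ) :
    truncRHS R (fun m => x m + y m) n t = truncRHS R x n t + truncRHS R y n t := by
  have hmx : ∀ m : Z2, x m ≠ 0 → m ∈ S1 := fun m h => by
    by_contra hm; exact h (hxS m hm)
  have hmy : ∀ m : Z2, y m ≠ 0 → m ∈ S2 := fun m h => by
    by_contra hm; exact h (hyS m hm)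
  have hcross : ∀ m m' : Z2, m ∈ S1 → m' ∈ S2 → m ≠ m' := fun m m' h1 h2 heq =>
    (Finset.disjoint_left.1 hdisj h1) (heq ▸ h2)
  -- diagonal term splits
  have hdiag : -((‖x n + y n‖ : ℂ) ^ 2) * (x n + y n)
      = -((‖x n‖ : ℂ) ^ 2) * x n + -((‖y n‖ : ℂ) ^ 2) * y n := by
    by_cases hn1 : n ∈ S1
    · have : y n = 0 := hyS n (Finset.disjoint_left.1 hdisj hn1)
      rw [this]; simp
    · have : x n = 0 := hxS n hn1
      rw [this]; simp
  -- termwise splitting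
  have hterm : ∀ p : Z2 × Z2 × Z2,
      tTerm R (fun m => x m + y m) n t p = tTerm R x n t p + tTerm R y n t p := by
    rintro ⟨q1, q2, q3⟩
    unfold tTerm
    dsimp only
    by_cases hc : q1 - q2 + q3 = n ∧ q1 ≠ n ∧ q3 ≠ n ∧ |omega4 q1 q2 q3 n| ≤ (R : ℤ)
    · rw [if_pos hc, if_pos hc, if_pos hc]
      have habs : ¬ ((R : ℤ) < |omega4 q1 q2 q3 n|) := not_lt.2 hc.2.2.2
      -- mixed products vanish
      have h_aba : x q1 * (starRingEnd ℂ) (y q2) * x q3 = 0 := by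
        by_contra hne
        have h1 : x q1 ≠ 0 := fun h => hne (by rw [h]; ring)
        have h2 : y q2 ≠ 0 := fun h => hne (by rw [h]; simp)
        have h3 : x q3 ≠ 0 := fun h => hne (by rw [h]; ring)
        have hq1 := hmx q1 h1; have hq2 := hmy q2 h2; have hq3 := hmx q3 h3
        have h := (hnc q1 q3 q2 (Or.inl ⟨hq1, hq3, hq2⟩)).2
          (hcross q1 q2 hq1 hq2) (fun e => hcross q3 q2 hq3 hq2 e.symm)
        rw [hc.1] at h
        exact habs h
      have h_bab : y q1 * (starRingEnd ℂ) (x q2) * y q3 = 0 := by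
        by_contra hne
        have h1 : y q1 ≠ 0 := fun h => hne (by rw [h]; ring)
        have h2 : x q2 ≠ 0 := fun h => hne (by rw [h]; simp)
        have h3 : y q3 ≠ 0 := fun h => hne (by rw [h]; ring)
        have hq1 := hmy q1 h1; have hq2 := hmx q2 h2; have hq3 := hmy q3 h3
        have h := (hnc q1 q3 q2 (Or.inr ⟨hq1, hq3, hq2⟩)).2
          ((hcross q2 q1 hq2 hq1).symm) (hcross q2 q3 hq2 hq3)
        rw [hc.1] at h
        exact habs h
      have h_aab : x q1 * (starRingEnd ℂ) (x q2) * y q3 = 0 := by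
        by_contra hne
        have h1 : x q1 ≠ 0 := fun h => hne (by rw [h]; ring)
        have h2 : x q2 ≠ 0 := fun h => hne (by rw [h]; simp)
        have h3 : y q3 ≠ 0 := fun h => hne (by rw [h]; ring)
        have hq1 := hmx q1 h1; have hq2 := hmx q2 h2; have hq3 := hmy q3 h3
        have hne12 : q1 ≠ q2 := by
          intro e
          apply hc.2.2.1
          rw [← hc.1, e]; ring
        have h := (hnc q1 q2 q3 (Or.inl ⟨hq1, hq2, hq3⟩)).1 hne12 (hcross q2 q3 hq2 hq3)
        rw [hc.1] at h
        exact habs h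
      have h_bba : y q1 * (starRingEnd ℂ) (y q2) * x q3 = 0 := by
        by_contra hne
        have h1 : y q1 ≠ 0 := fun h => hne (by rw [h]; ring)
        have h2 : y q2 ≠ 0 := fun h => hne (by rw [h]; simp)
        have h3 : x q3 ≠ 0 := fun h => hne (by rw [h]; ring)
        have hq1 := hmy q1 h1; have hq2 := hmy q2 h2; have hq3 := hmx q3 h3
        have hne12 : q1 ≠ q2 := by
          intro e
          apply hc.2.2.1
          rw [← hc.1, e]; ring
        have h := (hnc q1 q2 q3 (Or.inr ⟨hq1, hq2, hq3⟩)).1 hne12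
          ((hcross q3 q2 hq3 hq2).symm)
        rw [hc.1] at h
        exact habs h
      have h_baa : y q1 * (starRingEnd ℂ) (x q2) * x q3 = 0 := by
        by_contra hne
        have h1 : y q1 ≠ 0 := fun h => hne (by rw [h]; ring)
        have h2 : x q2 ≠ 0 := fun h => hne (by rw [h]; simp)
        have h3 : x q3 ≠ 0 := fun h => hne (by rw [h]; ring)
        have hq1 := hmy q1 h1; have hq2 := hmx q2 h2; have hq3 := hmx q3 h3
        have hne32 : q3 ≠ q2 := by
          intro e
          apply hc.2.1
          rw [← hc.1, e]; ring
        have h := (hnc q3 q2 q1 (Or.inl ⟨hq3, hq2, hq1⟩)).1 hne32 (hcross q2 q1 hq2 hq1)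
        have heq : q3 - q2 + q1 = n := by rw [← hc.1]; ring
        rw [heq, ← omega4_swap] at h
        exact habs h
      have h_abb : x q1 * (starRingEnd ℂ) (y q2) * y q3 = 0 := by
        by_contra hne
        have h1 : x q1 ≠ 0 := fun h => hne (by rw [h]; ring)
        have h2 : y q2 ≠ 0 := fun h => hne (by rw [h]; simp)
        have h3 : y q3 ≠ 0 := fun h => hne (by rw [h]; ring)
        have hq1 := hmx q1 h1; have hq2 := hmy q2 h2; have hq3 := hmy q3 h3
        have hne32 : q3 ≠ q2 := by
          intro e
          apply hc.2.1
          rw [← hc.1, e]; ring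
        have h := (hnc q3 q2 q1 (Or.inr ⟨hq3, hq2, hq1⟩)).1 hne32
          ((hcross q1 q2 hq1 hq2).symm)
        have heq : q3 - q2 + q1 = n := by rw [← hc.1]; ring
        rw [heq, ← omega4_swap] at h
        exact habs h
      -- expand and simplify
      have hexp : (x q1 + y q1) * (starRingEnd ℂ) (x q2 + y q2) * (x q3 + y q3)
          = x q1 * (starRingEnd ℂ) (x q2) * x q3 + y q1 * (starRingEnd ℂ) (y q2) * y q3
            + (x q1 * (starRingEnd ℂ) (y q2) * x q3 + y q1 * (starRingEnd ℂ) (x q2) * y q3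
              + x q1 * (starRingEnd ℂ) (x q2) * y q3 + y q1 * (starRingEnd ℂ) (y q2) * x q3
              + y q1 * (starRingEnd ℂ) (x q2) * x q3 + x q1 * (starRingEnd ℂ) (y q2) * y q3) := by
        rw [map_add]
        ring
      rw [hexp, h_aba, h_bab, h_aab, h_bba, h_baa, h_abb]
      ring
    · rw [if_neg hc, if_neg hc, if_neg hc]
      ring
  rw [truncRHS_eq, truncRHS_eq, truncRHS_eq]
  have hxy : Summable fun m : Z2 => ‖x m + y m‖ :=
    Summable.of_nonneg_of_le (fun _ => norm_nonneg _) (fun m => norm_add_le _ _) (hx.add hy)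
  have htsum : (∑' p, tTerm R (fun m => x m + y m) n t p)
      = (∑' p, tTerm R x n t p) + ∑' p, tTerm R y n t p := by
    rw [tsum_congr hterm]
    exact Summable.tsum_add (summable_tTerm R hx n t) (summable_tTerm R hy n t)
  rw [htsum, hdiag]
  ring

/-- Pasting lemma: if `S1, S2` are finite disjoint `R`-closed
subsets of `ℤ²` which are not connected by any parallelogram of eccentricity `≤ R`,
and `a, b` solve the `R`-truncated system on an interval `I ∋ 0` with initial data
supported in `S1` and `S2` respectively, then `a + b` also solves the `R`-truncated
system on `I`. -/
theorem pasting_lemma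
    (R : ℕ) (S1 S2 : Finset Z2) (hdisj : Disjoint S1 S2)
    (h1 : RClosed R (S1 : Set Z2)) (h2 : RClosed R (S2 : Set Z2))
    (hnc : NotConnected R (S1 : Set Z2) (S2 : Set Z2))
    (I : Set ℝ) (hI : I.OrdConnected) (h0I : (0 : ℝ) ∈ I)
    (a b : ℝ → Z2 → ℂ)
    (ha : IsTruncSolution R I a) (hb : IsTruncSolution R I b)
    (hasupp : ∀ n : Z2, n ∉ S1 → a 0 n = 0)
    (hbsupp : ∀ n : Z2, n ∉ S2 → b 0 n = 0) :
    IsTruncSolution R I (fun t n => a t n + b t n) := by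
  have hA := support_invariant R S1 h1 I hI h0I a ha hasupp
  have hB := support_invariant R S2 h2 I hI h0I b hb hbsupp
  refine ⟨?_, ?_, ?_⟩
  · intro t ht
    exact Summable.of_nonneg_of_le (fun n => norm_nonneg _) (fun n => norm_add_le _ _)
      ((ha.1 t ht).add (hb.1 t ht))
  · intro t1 ht1 t2 ht2
    obtain ⟨C, hC⟩ := ha.2.1 t1 ht1 t2 ht2
    obtain ⟨C', hC'⟩ := hb.2.1 t1 ht1 t2 ht2
    refine ⟨C + C', fun t htm => ?_⟩
    have h1s := ha.1 t htm.2
    have h2s := hb.1 t htm.2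
    calc (∑' n : Z2, ‖a t n + b t n‖) ≤ ∑' n : Z2, (‖a t n‖ + ‖b t n‖) :=
          Summable.tsum_le_tsum (fun n => norm_add_le _ _)
            (Summable.of_nonneg_of_le (fun n => norm_nonneg _)
              (fun n => norm_add_le _ _) (h1s.add h2s)) (h1s.add h2s)
      _ = (∑' n : Z2, ‖a t n‖) + ∑' n : Z2, ‖b t n‖ := Summable.tsum_add h1s h2s
      _ ≤ C + C' := add_le_add (hC t htm) (hC' t htm)
  · intro n t ht
    have hd := (ha.2.2 n t ht).add (hb.2.2 n t ht)
    have hsplit := truncRHS_add_split R S1 S2 hdisj hnc (ha.1 t ht) (hb.1 t ht)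
      (fun m hm => hA t ht m hm) (fun m hm => hB t ht m hm) n t
    rw [show truncRHS R (fun m => a t m + b t m) n t
        = truncRHS R (a t) n t + truncRHS R (b t) n t from hsplit]
    exact hd

end
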